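/- Let Λ ⊂ {0,1}^ℕ be the image of the map ν ∘ λ, where λ concatenates initial segments and ν inserts padding blocks of lengths a_1, a_2, a_3, … (an increasing sequence with (b_n + n)/a_{n+1} → 0, b_n = Σ_{i≤n} a_i), alternating blocks of 0's and blocks repeating successive symbols of λ(x). Then for any two distinct x̂, ŷ ∈ Λ and any δ ∈ (0,1], Φ_{(σ,x̂,ŷ)}(δ) = 0. -/

import Mathlib

open Filter

noncomputable def Phi {α : Type*} (d : α → α → ℝ) (f : α → α) (x y : α) (δ : ℝ) : ℝ :=
  liminf (fun n : ℕ =>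
    (((Finset.range (n+1)).filter (fun k => d (f^[k] x) (f^[k] y) < δ)).card : ℝ) / n) atTop

noncomputable def PhiStar {α : Type*} (d : α → α → ℝ) (f : α → α) (x y : α) (δ : ℝ) : ℝ :=
  limsup (fun n : ℕ =>
    (((Finset.range (n+1)).filter (fun k => d (f^[k] x) (f^[k] y) < δ)).card : ℝ) / n) atTop

open Classical in
noncomputable def shiftDist (x y : ℕ → Bool) : ℝ :=
  if x = y then 0 else (2:ℝ)⁻¹ ^ (sInf {j | x j ≠ y j})

def shift (x : ℕ → Bool) : ℕ → Bool := fun n => x (n+1)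

noncomputable def diamX (X : Type*) [MetricSpace X] : ℝ := Metric.diam (Set.univ : Set X)

namespace Stmt15Aux

lemma shift_iterate (k : ℕ) (x : ℕ → Bool) (n : ℕ) : (shift^[k] x) n = x (n + k) := by
  induction k generalizing x n with
  | zero => simp
  | succ k ih =>
    rw [Function.iterate_succ_apply, ih]
    rfl

lemma shiftDist_eq_one {x y : ℕ → Bool} (h : x 0 ≠ y 0) : shiftDist x y = 1 := by
  have hne : x ≠ y := fun he => h (by rw [he])
  rw [shiftDist, if_neg hne]
  have h0 : sInf {j | x j ≠ y j} = 0 := Nat.sInf_eq_zero.mpr (Or.inl h)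
  rw [h0, pow_zero]

def tri (t : ℕ) : ℕ := t * (t+1) / 2

lemma tri_succ (t : ℕ) : tri (t+1) = tri t + (t+1) := by
  obtain ⟨k, hk⟩ := Nat.even_mul_succ_self t
  have h2 : (t+1)*(t+1+1) = t*(t+1) + 2*(t+1) := by ring
  unfold tri
  omega

lemma le_tri (t : ℕ) : t ≤ tri t := by
  induction t with
  | zero => simp [tri]
  | succ k ih => rw [tri_succ]; omega

lemma tri_strictMono : StrictMono tri :=
  strictMono_nat_of_lt_succ (fun n => by rw [tri_succ]; omega)

lemma cc_eq (t s : ℕ) (h1 : 1 ≤ s) (h2 : s ≤ t) :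
    ((Finset.Icc 1 (tri t + s)).filter (fun t' => t' * (t' + 1) / 2 ≤ tri t + s)).card = t := by
  have hset : (Finset.Icc 1 (tri t + s)).filter (fun t' => t' * (t' + 1) / 2 ≤ tri t + s)
      = Finset.Icc 1 t := by
    ext t'
    simp only [Finset.mem_filter, Finset.mem_Icc]
    constructor
    · rintro ⟨⟨h1', _⟩, h3'⟩
      refine ⟨h1', ?_⟩
      by_contra hlt
      push_neg at hlt
      have hge : tri (t+1) ≤ tri t' := tri_strictMono.monotone hlt
      have : tri t' ≤ tri t + s := h3'
      rw [tri_succ] at hge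
      omega
    · rintro ⟨h1', h2'⟩
      have hm : tri t' ≤ tri t := tri_strictMono.monotone h2'
      have hl := le_tri t'
      have hc : tri t' ≤ tri t + s := by omega
      exact ⟨⟨h1', by omega⟩, hc⟩
  rw [hset, Nat.card_Icc]
  omega

lemma not_tri (t s : ℕ) (h1 : 1 ≤ s) (h2 : s ≤ t) :
    ¬ ∃ t' ∈ Finset.Icc 1 (tri t + s), t' * (t' + 1) / 2 = tri t + s := by
  rintro ⟨t', -, ht'⟩
  have hh : tri t' = tri t + s := ht'
  have h3 : tri t < tri t' := by omega
  have h4 : t < t' := tri_strictMono.lt_iff_lt.mp h3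
  have h5 : tri (t+1) ≤ tri t' := tri_strictMono.monotone h4
  rw [tri_succ] at h5
  omega

lemma tri_decomp (m : ℕ) : ∃ u, tri u ≤ m ∧ m < tri u + (u+1) := by
  induction m with
  | zero => exact ⟨0, by simp [tri]⟩
  | succ k ih =>
    obtain ⟨u, hu1, hu2⟩ := ih
    by_cases h : k + 1 < tri u + (u+1)
    · exact ⟨u, by omega, h⟩
    · refine ⟨u+1, ?_, ?_⟩ <;> rw [tri_succ] <;> omega

lemma liminf_eq_zero_of (u : ℕ → ℝ) (h0 : ∀ n, 0 ≤ u n) (h2 : ∀ n, u n ≤ 2)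
    (hf : ∀ ε : ℝ, 0 < ε → ∃ᶠ n in atTop, u n ≤ ε) : liminf u atTop = 0 := by
  have hbge : IsBoundedUnder (· ≥ ·) atTop u :=
    ⟨0, Filter.eventually_map.mpr (Filter.Eventually.of_forall h0)⟩
  have hble : IsBoundedUnder (· ≤ ·) atTop u :=
    ⟨2, Filter.eventually_map.mpr (Filter.Eventually.of_forall h2)⟩
  have hup : liminf u atTop ≤ 0 := by
    refine le_of_forall_pos_le_add fun ε hε => ?_
    have := Filter.liminf_le_of_frequently_le (hf ε hε) hbge
    linarith
  have hdn : 0 ≤ liminf u atTop :=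
    Filter.le_liminf_of_le hble.isCoboundedUnder_ge (Filter.Eventually.of_forall h0)
  linarith

end Stmt15Aux

open Stmt15Aux

theorem stmt15 (a : ℕ → ℕ) (hpos : ∀ i, 1 ≤ i → 0 < a i)
    (hmono : ∀ i j, 1 ≤ i → i < j → a i < a j)
    (b : ℕ → ℕ) (hb : ∀ n, b n = ∑ i ∈ Finset.Icc 1 n, a i)
    (hab : Filter.Tendsto (fun n : ℕ => ((b n + n : ℕ) : ℝ) / (a (n+1) : ℝ)) atTop (nhds 0))
    (L : (ℕ → Bool) → (ℕ → Bool))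
    (hL : ∀ x : ℕ → Bool, ∀ n : ℕ, 1 ≤ n → ∀ j, j < n → L x (n*(n-1)/2 + j) = x j)
    (N : (ℕ → Bool) → (ℕ → Bool))
    (hN : ∀ z : ℕ → Bool, ∀ i : ℕ, 1 ≤ i → ∀ p : ℕ, b (i-1) ≤ p → p < b i →
      N z p = if (∃ t ∈ Finset.Icc 1 i, t*(t+1)/2 = i) then false
        else z (i - ((Finset.Icc 1 i).filter (fun t => t*(t+1)/2 ≤ i)).card - 1)) :
    ∀ xh ∈ Set.range (fun x => N (L x)), ∀ yh ∈ Set.range (fun x => N (L x)), xh ≠ yh →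
      ∀ δ : ℝ, 0 < δ → δ ≤ 1 → Phi shiftDist shift xh yh δ = 0 := by
  intro xh hxh yh hyh hne δ hδ0 hδ1
  obtain ⟨x, hx⟩ := hxh
  obtain ⟨y, hy⟩ := hyh
  have hx' : N (L x) = xh := hx
  have hy' : N (L y) = yh := hy
  -- basic facts about b and a
  have hb0 : b 0 = 0 := by rw [hb]; simp
  have hbs : ∀ k, b (k+1) = b k + a (k+1) := by
    intro k
    rw [hb, hb, Finset.sum_Icc_succ_top (by omega : 1 ≤ k+1)]
  have ha_ge : ∀ i, 1 ≤ i → i ≤ a i := by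
    intro i hi
    induction i with
    | zero => omega
    | succ k ih =>
      rcases Nat.lt_or_ge k 1 with h | h
      · have := hpos (k+1) (by omega); omega
      · have h1 := hmono k (k+1) h (by omega)
        have h2 := ih h
        omega
  have hbge : ∀ k, k ≤ b k := by
    intro k
    induction k with
    | zero => omega
    | succ m ih =>
      have h1 := hbs m
      have h2 := hpos (m+1) (by omega)
      omega
  have hblock : ∀ p : ℕ, ∃ i, 1 ≤ i ∧ b (i-1) ≤ p ∧ p < b i := by
    intro p
    have hex : ∃ i, p < b i := ⟨p+1, by have := hbge (p+1); omega⟩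
    have hi : p < b (Nat.find hex) := Nat.find_spec hex
    have h1 : 1 ≤ Nat.find hex := by
      rcases Nat.eq_zero_or_pos (Nat.find hex) with h | h
      · rw [h, hb0] at hi; omega
      · omega
    have h2 : b (Nat.find hex - 1) ≤ p := by
      have h3 := Nat.find_min hex (show Nat.find hex - 1 < Nat.find hex by omega)
      omega
    exact ⟨_, h1, h2, hi⟩
  -- find a coordinate where x and y differ
  have hexj : ∃ j, x j ≠ y j := by
    obtain ⟨p, hp⟩ := Function.ne_iff.mp hne
    obtain ⟨i, hi1, hpl, hpu⟩ := hblock p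
    have e1 := hN (L x) i hi1 p hpl hpu
    have e2 := hN (L y) i hi1 p hpl hpu
    rw [hx'] at e1
    rw [hy'] at e2
    by_cases htr : ∃ t ∈ Finset.Icc 1 i, t*(t+1)/2 = i
    · rw [if_pos htr] at e1 e2
      exact absurd (e1.trans e2.symm) hp
    · rw [if_neg htr] at e1 e2
      set m0 := i - ((Finset.Icc 1 i).filter (fun t => t*(t+1)/2 ≤ i)).card - 1 with hm0
      have hLne : L x m0 ≠ L y m0 := fun h => hp (by rw [e1, e2, h])
      obtain ⟨u, hu1, hu2⟩ := tri_decomp m0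
      have e3 := hL x (u+1) (by omega) (m0 - tri u) (by omega)
      have e4 := hL y (u+1) (by omega) (m0 - tri u) (by omega)
      have h5 : (u+1)*((u+1)-1)/2 = tri u := by
        show (u+1)*u/2 = tri u
        unfold tri
        rw [Nat.mul_comm]
      rw [h5] at e3 e4
      have h6 : tri u + (m0 - tri u) = m0 := by omega
      rw [h6] at e3 e4
      exact ⟨m0 - tri u, fun h => hLne (by rw [e3, e4, h])⟩
  obtain ⟨j, hj⟩ := hexj
  -- key: blocks on which xh and yh differ everywhere
  have hkey : ∀ w, j ≤ w → ∀ p, b (tri (w+1) + (j+1) - 1) ≤ p → p < b (tri (w+1) + (j+1)) →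
      xh p ≠ yh p := by
    intro w hw p hp1 hp2
    have e1 := hN (L x) (tri (w+1) + (j+1)) (by omega) p hp1 hp2
    have e2 := hN (L y) (tri (w+1) + (j+1)) (by omega) p hp1 hp2
    rw [hx'] at e1
    rw [hy'] at e2
    rw [if_neg (not_tri (w+1) (j+1) (by omega) (by omega)),
      cc_eq (w+1) (j+1) (by omega) (by omega)] at e1 e2
    have hm : tri (w+1) + (j+1) - (w+1) - 1 = tri w + j := by
      have := tri_succ w
      omega
    rw [hm] at e1 e2
    have e3 := hL x (w+1) (by omega) j (by omega)
    have e4 := hL y (w+1) (by omega) j (by omega)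
    have h5 : (w+1)*((w+1)-1)/2 = tri w := by
      show (w+1)*w/2 = tri w
      unfold tri
      rw [Nat.mul_comm]
    rw [h5] at e3 e4
    rw [e3] at e1
    rw [e4] at e2
    intro h
    rw [e1, e2] at h
    exact hj h
  have hmain : ∀ w, j ≤ w → ∃ i, w + 2 ≤ i ∧
      (∀ p, b (i-1) ≤ p → p < b i → xh p ≠ yh p) := by
    intro w hw
    refine ⟨tri (w+1) + (j+1), ?_, hkey w hw⟩
    have := le_tri (w+1)
    omega
  -- conclude
  unfold Phi
  apply liminf_eq_zero_of
  · intro n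
    positivity
  · intro n
    rcases Nat.eq_zero_or_pos n with h | h
    · subst h; simp
    · have hnpos : (0:ℝ) < (n:ℝ) := by exact_mod_cast h
      rw [div_le_iff₀ hnpos]
      have hcard : ((Finset.range (n+1)).filter
          (fun k => shiftDist (shift^[k] xh) (shift^[k] yh) < δ)).card ≤ n+1 := by
        calc _ ≤ (Finset.range (n+1)).card := Finset.card_le_card (Finset.filter_subset _ _)
        _ = n + 1 := Finset.card_range _
      have hc : (((Finset.range (n+1)).filter
          (fun k => shiftDist (shift^[k] xh) (shift^[k] yh) < δ)).card : ℝ) ≤ (n:ℝ) + 1 := by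
        exact_mod_cast hcard
      have h1 : (1:ℝ) ≤ (n:ℝ) := by exact_mod_cast h
      linarith
  · intro ε hε
    rw [Filter.frequently_atTop]
    intro N0
    have hev : ∀ᶠ n in atTop, ((b n + n : ℕ) : ℝ) / (a (n+1) : ℝ) < ε/2 :=
      hab.eventually (eventually_lt_nhds (by positivity))
    obtain ⟨M, hM⟩ := Filter.eventually_atTop.mp hev
    obtain ⟨i, hi2, hdiff⟩ := hmain (max j (max M N0)) (le_max_left _ _)
    have hwM : M ≤ max j (max M N0) := le_trans (le_max_left _ _) (le_max_right _ _)
    have hwN : N0 ≤ max j (max M N0) := le_trans (le_max_right _ _) (le_max_right _ _)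
    have hi1 : 1 ≤ i := by omega
    have hai : i ≤ a i := ha_ge i hi1
    have hbi : b i = b (i-1) + a i := by
      have h7 := hbs (i-1)
      have h8 : i - 1 + 1 = i := by omega
      rwa [h8] at h7
    refine ⟨b i - 1, by omega, ?_⟩
    -- estimate
    have hMi := hM (i-1) (by omega)
    rw [show i - 1 + 1 = i by omega] at hMi
    have hapos : (0:ℝ) < (a i : ℝ) := by exact_mod_cast hpos i hi1
    rw [div_lt_iff₀ hapos] at hMi
    have hA : ((b (i-1) : ℕ) : ℝ) < ε/2 * (a i : ℝ) :=
      lt_of_le_of_lt (by exact_mod_cast Nat.le_add_right (b (i-1)) (i-1)) hMi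
    have hsub : (Finset.range (b i - 1 + 1)).filter
        (fun k => shiftDist (shift^[k] xh) (shift^[k] yh) < δ) ⊆ Finset.range (b (i-1)) := by
      intro k hk
      rw [Finset.mem_filter, Finset.mem_range] at hk
      rw [Finset.mem_range]
      by_contra hge
      push_neg at hge
      have hne' : xh k ≠ yh k := hdiff k hge (by omega)
      have hd1 : shiftDist (shift^[k] xh) (shift^[k] yh) = 1 := by
        apply shiftDist_eq_one
        rw [shift_iterate, shift_iterate]
        simpa using hne'
      rw [hd1] at hk
      linarith [hk.2]
    have hcard : (((Finset.range (b i - 1 + 1)).filter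
        (fun k => shiftDist (shift^[k] xh) (shift^[k] yh) < δ)).card : ℝ) ≤ ((b (i-1) : ℕ) : ℝ) := by
      have := le_trans (Finset.card_le_card hsub) (le_of_eq (Finset.card_range _))
      exact_mod_cast this
    have ha2 : (2:ℝ) ≤ (a i : ℝ) := by
      have : 2 ≤ a i := by omega
      exact_mod_cast this
    have hcast : ((b i - 1 : ℕ) : ℝ) = (b i : ℝ) - 1 := by
      have h9 : 1 ≤ b i := by omega
      push_cast [h9]
      ring
    have hn2 : (a i : ℝ)/2 ≤ ((b i - 1 : ℕ) : ℝ) := by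
      rw [hcast]
      have : (a i : ℝ) ≤ (b i : ℝ) := by exact_mod_cast le_trans (Nat.le_add_left _ _) hbi.ge
      linarith
    have hnpos : (0:ℝ) < ((b i - 1 : ℕ) : ℝ) := by
      have : (0:ℕ) < b i - 1 := by omega
      exact_mod_cast this
    rw [div_le_iff₀ hnpos]
    have hmul : ε * ((a i : ℝ)/2) ≤ ε * ((b i - 1 : ℕ) : ℝ) :=
      mul_le_mul_of_nonneg_left hn2 (le_of_lt hε)
    calc (((Finset.range (b i - 1 + 1)).filter
        (fun k => shiftDist (shift^[k] xh) (shift^[k] yh) < δ)).card : ℝ)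
        ≤ ((b (i-1) : ℕ) : ℝ) := hcard
      _ ≤ ε/2 * (a i : ℝ) := le_of_lt hA
      _ = ε * ((a i : ℝ)/2) := by ring
      _ ≤ ε * ((b i - 1 : ℕ) : ℝ) := hmul
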